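/- Let Ω ⊆ ℂ be open and let W : Ω → ℂ be twice continuously differentiable and satisfy the ℂP¹ sigma model equation ∂∂̄W = (2·conj(W)/(1+|W|²))·∂W·∂̄W on Ω. Then the function J : Ω → ℂ defined by J := ∂W · conj(∂̄W) / (1+|W|²)² satisfies ∂̄J = 0 on Ω (i.e. J is holomorphic on Ω). -/

import Mathlib

open Complex

/-- The Wirtinger derivative `∂F(ξ) = (1/2)(DF(ξ)(1) − i·DF(ξ)(i))`. -/
noncomputable def wd {E : Type*} [NormedAddCommGroup E] [NormedSpace ℂ E]
    (F : ℂ → E) (ξ : ℂ) : E :=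
  (2 : ℂ)⁻¹ • (fderiv ℝ F ξ 1 - Complex.I • fderiv ℝ F ξ Complex.I)

/-- The Wirtinger derivative `∂̄F(ξ) = (1/2)(DF(ξ)(1) + i·DF(ξ)(i))`. -/
noncomputable def wdbar {E : Type*} [NormedAddCommGroup E] [NormedSpace ℂ E]
    (F : ℂ → E) (ξ : ℂ) : E :=
  (2 : ℂ)⁻¹ • (fderiv ℝ F ξ 1 + Complex.I • fderiv ℝ F ξ Complex.I)

noncomputable def lmap (a b : ℂ) : ℂ →L[ℝ] ℂ :=
  a • ContinuousLinearMap.id ℝ ℂ + b • Complex.conjCLE.toContinuousLinearMap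

lemma lmap_apply (a b z : ℂ) : lmap a b z = a * z + b * (starRingEnd ℂ) z := by
  simp [lmap, smul_eq_mul]

lemma lmap_eq (L : ℂ →L[ℝ] ℂ) :
    L = lmap ((2:ℂ)⁻¹ * (L 1 - Complex.I * L Complex.I))
        ((2:ℂ)⁻¹ * (L 1 + Complex.I * L Complex.I)) := by
  ext z
  have hz : z = (z.re : ℝ) • (1:ℂ) + (z.im : ℝ) • Complex.I := by
    simp [Complex.real_smul, Complex.re_add_im]
  have hc : (starRingEnd ℂ) z = (z.re : ℂ) - (z.im : ℂ) * Complex.I := by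
    simp [Complex.ext_iff]
  conv_lhs => rw [hz]
  rw [map_add, map_smul, map_smul, lmap_apply, hc]
  rw [Complex.real_smul, Complex.real_smul]
  nth_rewrite 3 [hz]
  rw [Complex.real_smul, Complex.real_smul]
  have h2 : (Complex.I : ℂ) * Complex.I = -1 := Complex.I_mul_I
  linear_combination ((z.im : ℂ) * L Complex.I) * h2

abbrev HasW (F : ℂ → ℂ) (a b ξ : ℂ) : Prop := HasFDerivAt F (lmap a b) ξ

lemma HasFDerivAt.hasW {F : ℂ → ℂ} {L : ℂ →L[ℝ] ℂ} {ξ : ℂ} (h : HasFDerivAt F L ξ) :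
    HasW F (wd F ξ) (wdbar F ξ) ξ := by
  have hL := h.fderiv
  have h1 : wd F ξ = (2:ℂ)⁻¹ * (L 1 - Complex.I * L Complex.I) := by
    rw [wd, hL]; simp [smul_eq_mul]
  have h2 : wdbar F ξ = (2:ℂ)⁻¹ * (L 1 + Complex.I * L Complex.I) := by
    rw [wdbar, hL]; simp [smul_eq_mul]
  rw [HasW, h1, h2, ← lmap_eq]
  exact h

lemma HasW.wd_eq {F : ℂ → ℂ} {a b ξ : ℂ} (h : HasW F a b ξ) : wd F ξ = a := by
  rw [wd, HasFDerivAt.fderiv h]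
  simp only [lmap_apply, smul_eq_mul, map_one, mul_one, Complex.conj_I]
  have h2 : (Complex.I : ℂ) * Complex.I = -1 := Complex.I_mul_I
  linear_combination (2:ℂ)⁻¹ * (b - a) * h2

lemma HasW.wdbar_eq {F : ℂ → ℂ} {a b ξ : ℂ} (h : HasW F a b ξ) : wdbar F ξ = b := by
  rw [wdbar, HasFDerivAt.fderiv h]
  simp only [lmap_apply, smul_eq_mul, map_one, mul_one, Complex.conj_I]
  have h2 : (Complex.I : ℂ) * Complex.I = -1 := Complex.I_mul_I
  linear_combination (2:ℂ)⁻¹ * (a - b) * h2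

lemma HasW.mul {F G : ℂ → ℂ} {a b c d ξ : ℂ} (hF : HasW F a b ξ) (hG : HasW G c d ξ) :
    HasW (fun z => F z * G z) (F ξ * c + G ξ * a) (F ξ * d + G ξ * b) ξ := by
  refine (HasFDerivAt.mul hF hG).congr_fderiv ?_
  ext z
  simp only [lmap_apply, ContinuousLinearMap.add_apply, ContinuousLinearMap.coe_smul',
    Pi.smul_apply, smul_eq_mul]
  ring

lemma HasW.const_add {F : ℂ → ℂ} {a b ξ : ℂ} (c : ℂ) (hF : HasW F a b ξ) :
    HasW (fun z => c + F z) a b ξ := by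
  simpa using hF

lemma HasW.conj {F : ℂ → ℂ} {a b ξ : ℂ} (hF : HasW F a b ξ) :
    HasW (fun z => (starRingEnd ℂ) (F z)) ((starRingEnd ℂ) b) ((starRingEnd ℂ) a) ξ := by
  refine ((Complex.conjCLE.toContinuousLinearMap.hasFDerivAt (x := F ξ)).comp ξ hF).congr_fderiv ?_
  ext z
  simp only [lmap_apply, ContinuousLinearMap.coe_comp', Function.comp_apply,
    ContinuousLinearEquiv.coe_coe, Complex.conjCLE_apply, map_add, map_mul,
    Complex.conj_conj]
  ring

lemma HasW.holComp {φ F : ℂ → ℂ} {m a b ξ : ℂ} (hφ : HasDerivAt φ m (F ξ))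
    (hF : HasW F a b ξ) : HasW (fun z => φ (F z)) (m * a) (m * b) ξ := by
  refine ((hφ.hasFDerivAt.restrictScalars ℝ).comp ξ hF).congr_fderiv ?_
  ext z
  simp only [lmap_apply, ContinuousLinearMap.coe_comp', Function.comp_apply,
    ContinuousLinearMap.coe_restrictScalars', ContinuousLinearMap.smulRight_apply,
    ContinuousLinearMap.one_apply, ContinuousLinearMap.toSpanSingleton_apply, smul_eq_mul]
  ring

/-- For any solution `W` of the `ℂP¹` sigma model equation on an open set `Ω`, the Hopf
differential coefficient `J = ∂W · conj(∂̄W)/(1+|W|²)²` satisfies `∂̄J = 0` on `Ω`. -/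
theorem CP1_hopf_differential_holomorphic (Ω : Set ℂ) (hΩ : IsOpen Ω)
    (W : ℂ → ℂ) (hW : ContDiffOn ℝ 2 W Ω)
    (hEL : ∀ ξ ∈ Ω, wd (fun z => wdbar W z) ξ
      = 2 * (starRingEnd ℂ) (W ξ) / (1 + (Complex.normSq (W ξ) : ℂ))
        * wd W ξ * wdbar W ξ)
    (J : ℂ → ℂ)
    (hJ : J = fun ξ => wd W ξ * (starRingEnd ℂ) (wdbar W ξ)
      / ((1 + (Complex.normSq (W ξ) : ℂ)) ^ 2)) :
    ∀ ξ ∈ Ω, wdbar J ξ = 0 := by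
  intro ξ hξ
  -- differentiability facts
  have hWdiff : ∀ y ∈ Ω, HasFDerivAt W (fderiv ℝ W y) y := fun y hy =>
    ((hW.differentiableOn (by norm_num)).differentiableAt (hΩ.mem_nhds hy)).hasFDerivAt
  have hW'cd : ContDiffOn ℝ 1 (fderiv ℝ W) Ω := hW.fderiv_of_isOpen hΩ le_rfl
  have hΦ : HasFDerivAt (fderiv ℝ W) (fderiv ℝ (fderiv ℝ W) ξ) ξ :=
    ((hW'cd.differentiableOn (by norm_num)).differentiableAt (hΩ.mem_nhds hξ)).hasFDerivAt
  set Φ := fderiv ℝ (fderiv ℝ W) ξ with hΦdef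
  have hsymm : ∀ v w, Φ v w = Φ w v := fun v w =>
    second_derivative_symmetric_of_eventually
      (Filter.eventually_of_mem (hΩ.mem_nhds hξ) (fun y hy => hWdiff y hy)) hΦ v w
  have hev : ∀ v : ℂ, HasFDerivAt (fun z => fderiv ℝ W z v)
      ((fderiv ℝ W ξ).comp (0 : ℂ →L[ℝ] ℂ) + Φ.flip v) ξ := fun v =>
    hΦ.clm_apply (hasFDerivAt_const v ξ)
  have hp' : HasFDerivAt (fun z => wd W z)
      ((2:ℂ)⁻¹ • (((fderiv ℝ W ξ).comp (0 : ℂ →L[ℝ] ℂ) + Φ.flip 1) -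
        Complex.I • ((fderiv ℝ W ξ).comp (0 : ℂ →L[ℝ] ℂ) + Φ.flip Complex.I))) ξ :=
    ((hev 1).sub ((hev Complex.I).const_smul Complex.I)).const_smul (2:ℂ)⁻¹
  have hq' : HasFDerivAt (fun z => wdbar W z)
      ((2:ℂ)⁻¹ • (((fderiv ℝ W ξ).comp (0 : ℂ →L[ℝ] ℂ) + Φ.flip 1) +
        Complex.I • ((fderiv ℝ W ξ).comp (0 : ℂ →L[ℝ] ℂ) + Φ.flip Complex.I))) ξ :=
    ((hev 1).add ((hev Complex.I).const_smul Complex.I)).const_smul (2:ℂ)⁻¹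
  -- symmetry of mixed Wirtinger derivatives
  have hkey : wdbar (fun z => wd W z) ξ = wd (fun z => wdbar W z) ξ := by
    rw [wdbar, hp'.fderiv, wd, hq'.fderiv]
    simp only [ContinuousLinearMap.add_apply, ContinuousLinearMap.coe_smul',
      Pi.smul_apply, ContinuousLinearMap.coe_comp', Function.comp_apply,
      ContinuousLinearMap.zero_apply, map_zero, zero_add,
      ContinuousLinearMap.flip_apply, ContinuousLinearMap.coe_sub', Pi.sub_apply,
      ContinuousLinearMap.sub_apply, smul_eq_mul]
    linear_combination ((2:ℂ)⁻¹ * Complex.I) * (hsymm Complex.I 1)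
  -- HasW structures
  have hWw : HasW W (wd W ξ) (wdbar W ξ) ξ := (hWdiff ξ hξ).hasW
  have hp : HasW (fun z => wd W z) (wd (fun z => wd W z) ξ) (wdbar (fun z => wd W z) ξ) ξ :=
    hp'.hasW
  have hq : HasW (fun z => wdbar W z) (wd (fun z => wdbar W z) ξ)
      (wdbar (fun z => wdbar W z) ξ) ξ := hq'.hasW
  have hρ : HasW (fun z => 1 + W z * (starRingEnd ℂ) (W z))
      (W ξ * (starRingEnd ℂ) (wdbar W ξ) + (starRingEnd ℂ) (W ξ) * wd W ξ)
      (W ξ * (starRingEnd ℂ) (wd W ξ) + (starRingEnd ℂ) (W ξ) * wdbar W ξ) ξ :=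
    (hWw.mul hWw.conj).const_add 1
  have hRval : (fun z => 1 + W z * (starRingEnd ℂ) (W z)) ξ
      = (1 + (Complex.normSq (W ξ) : ℂ)) := by simp [Complex.mul_conj]
  have hρne : (1 + (Complex.normSq (W ξ) : ℂ)) ≠ 0 := by
    intro h0
    have := congrArg Complex.re h0
    simp at this
    nlinarith [Complex.normSq_nonneg (W ξ)]
  have hρρ := hρ.mul hρ
  have hRRne : ((1 : ℂ) + W ξ * (starRingEnd ℂ) (W ξ)) * (1 + W ξ * (starRingEnd ℂ) (W ξ)) ≠ 0 := by
    have : ((1 : ℂ) + W ξ * (starRingEnd ℂ) (W ξ)) = (1 + (Complex.normSq (W ξ) : ℂ)) := by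
      rw [Complex.mul_conj]
    rw [this]; exact mul_ne_zero hρne hρne
  have hinvd : HasDerivAt (fun y : ℂ => y⁻¹)
      (-((((1 : ℂ) + W ξ * (starRingEnd ℂ) (W ξ)) * (1 + W ξ * (starRingEnd ℂ) (W ξ))) ^ 2)⁻¹)
      (((1 : ℂ) + W ξ * (starRingEnd ℂ) (W ξ)) * (1 + W ξ * (starRingEnd ℂ) (W ξ))) :=
    hasDerivAt_inv hRRne
  have hinv := HasW.holComp
    (F := fun z => (1 + W z * (starRingEnd ℂ) (W z)) * (1 + W z * (starRingEnd ℂ) (W z)))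
    hinvd hρρ
  have h1 := hp.mul hq.conj
  have hJ4 := h1.mul hinv
  have hJeq : J = fun z => ((fun z => wd W z) z * (starRingEnd ℂ) ((fun z => wdbar W z) z)) *
      (fun z => ((1 + W z * (starRingEnd ℂ) (W z)) * (1 + W z * (starRingEnd ℂ) (W z)))⁻¹) z := by
    rw [hJ]
    funext z
    simp only [Complex.mul_conj]
    rw [div_eq_mul_inv, sq]
  rw [hJeq, hJ4.wdbar_eq]
  rw [hkey, hEL ξ hξ]
  simp only [map_mul, map_div₀, map_add, map_one, Complex.conj_conj, Complex.conj_ofReal,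
    map_ofNat, Complex.mul_conj]
  field_simp
  ring
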